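/- (Low-density normalization of the mean particle number.) Let d ≥ 2 and, for ε ∈ (0,1), let μ_ε = ε^{−(d−1)}. Then the mean number of particles under the grand canonical hard-sphere equilibrium measure, 𝔼^eq_ε[𝒩] := (1/𝒵^ε) ∑_{N≥0} (μ_ε^N / N!) N ∫_{𝕋^{dN}} ∏_{i≠j} 1_{|x_i − x_j| > ε} dX_N, satisfies μ_ε^{−1} 𝔼^eq_ε[𝒩] → 1 as ε → 0 (i.e. as μ_ε → ∞). -/

import Mathlib

open MeasureTheory Real

noncomputable section

/-- The unit `d`-dimensional torus. -/
abbrev Torus (d : ℕ) := Fin d → AddCircle (1 : ℝ)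

/-- The one-particle phase space `𝕋^d × ℝ^d`. -/
abbrev Phase (d : ℕ) := Torus d × EuclideanSpace ℝ (Fin d)

/-- The flat (Euclidean) distance on the torus. -/
noncomputable def torusDist {d : ℕ} (x y : Torus d) : ℝ :=
  Real.sqrt (∑ i, dist (x i) (y i) ^ 2)

/-- The Maxwellian `𝓜(v) = (2π)^{-d/2} exp(-|v|²/2)`. -/
noncomputable def maxwellian {d : ℕ} (v : EuclideanSpace ℝ (Fin d)) : ℝ :=
  (2 * π) ^ (-(d : ℝ) / 2) * Real.exp (-‖v‖ ^ 2 / 2)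

/- The hard-sphere exclusion indicator `1_{𝒟^ε_N}` (as a function of the positions). -/
open Classical in
noncomputable def exclInd {d : ℕ} (ε : ℝ) {N : ℕ} (X : Fin N → Torus d) : ℝ :=
  if ∀ i j : Fin N, i ≠ j → ε < torusDist (X i) (X j) then 1 else 0

/-- The Boltzmann–Grad scaling factor `μ_ε = ε^{-(d-1)}`. -/
noncomputable def muBG (d : ℕ) (ε : ℝ) : ℝ := (ε ^ (d - 1))⁻¹

/-- The grand canonical partition function
`𝒵^ε = ∑_N (μ_ε^N / N!) ∫ ∏_{i≠j} 1_{|x_i - x_j| > ε} dX_N` (the `N = 0` term equals `1`). -/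
noncomputable def partitionZ (d : ℕ) (ε : ℝ) : ℝ :=
  ∑' N : ℕ, muBG d ε ^ N / (Nat.factorial N : ℝ) * ∫ X : Fin N → Torus d, exclInd ε X

/-- The grand canonical equilibrium expectation of a functional
`F : ⨆_N (𝕋^d × ℝ^d)^N → ℝ`. -/
noncomputable def gceExp (d : ℕ) (ε : ℝ) (F : (N : ℕ) → (Fin N → Phase d) → ℝ) : ℝ :=
  (partitionZ d ε)⁻¹ *
    ∑' N : ℕ, muBG d ε ^ N / (Nat.factorial N : ℝ) *
      ∫ Z : Fin N → Phase d,
        exclInd ε (fun i => (Z i).1) * (∏ i, maxwellian (Z i).2) * F N Z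

/-- The empirical density `π^ε(h) = μ_ε^{-1} ∑_i h(z_i)`. -/
noncomputable def empDens {d : ℕ} (ε : ℝ) (h : Phase d → ℝ) (N : ℕ)
    (Z : Fin N → Phase d) : ℝ :=
  (muBG d ε)⁻¹ * ∑ i, h (Z i)

/-- The equilibrium fluctuation field `ζ^{ε,eq}(h) = √μ_ε (π ^ε(h) - 𝔼^eq_ε[π^ε(h)])`. -/
noncomputable def fluctField (d : ℕ) (ε : ℝ) (h : Phase d → ℝ) (N : ℕ)
    (Z : Fin N → Phase d) : ℝ :=
  Real.sqrt (muBG d ε) * (empDens ε h N Z - gceExp d ε (fun M W => empDens ε h M W))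

end

open scoped ENNReal NNReal

set_option maxHeartbeats 1000000

noncomputable section

namespace HS

instance (d N : ℕ) : BorelSpace (Fin N → Torus d) := Pi.borelSpace

instance : IsProbabilityMeasure (volume : Measure (AddCircle (1:ℝ))) := ⟨by simp⟩

instance (d : ℕ) : IsProbabilityMeasure (volume : Measure (Torus d)) :=
  ⟨by rw [volume_pi, Measure.pi_univ]; simp⟩

instance (d N : ℕ) : IsProbabilityMeasure (volume : Measure (Fin N → Torus d)) :=
  ⟨by rw [volume_pi, Measure.pi_univ]; simp⟩

lemma torusDist_comm {d : ℕ} (x y : Torus d) : torusDist x y = torusDist y x := by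
  unfold torusDist; congr 1; exact Finset.sum_congr rfl fun i _ => by rw [dist_comm]

lemma dist_le_torusDist {d : ℕ} (x y : Torus d) (k : Fin d) :
    dist (x k) (y k) ≤ torusDist x y := by
  rw [show dist (x k) (y k) = Real.sqrt (dist (x k) (y k) ^ 2) by
    rw [Real.sqrt_sq dist_nonneg]]
  exact Real.sqrt_le_sqrt (Finset.single_le_sum (f := fun i => dist (x i) (y i) ^ 2)
    (fun i _ => sq_nonneg _) (Finset.mem_univ k))

lemma continuous_torusDist₂ {d : ℕ} {α : Type*} [TopologicalSpace α] {f g : α → Torus d}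
    (hf : Continuous f) (hg : Continuous g) :
    Continuous fun a => torusDist (f a) (g a) := by
  unfold torusDist
  exact Real.continuous_sqrt.comp <| continuous_finset_sum _ fun k _ =>
    (Continuous.dist ((continuous_apply k).comp hf) ((continuous_apply k).comp hg)).pow 2

/-- The hard-sphere exclusion set. -/
def exclSet (d : ℕ) (ε : ℝ) (N : ℕ) : Set (Fin N → Torus d) :=
  {X | ∀ i j : Fin N, i ≠ j → ε < torusDist (X i) (X j)}

lemma isOpen_exclSet (d : ℕ) (ε : ℝ) (N : ℕ) : IsOpen (exclSet d ε N) := by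
  have h : exclSet d ε N =
      ⋂ i, ⋂ j, {X : Fin N → Torus d | i ≠ j → ε < torusDist (X i) (X j)} := by
    ext X; simp [exclSet, Set.mem_iInter]
  rw [h]
  refine isOpen_iInter_of_finite fun i => isOpen_iInter_of_finite fun j => ?_
  by_cases hij : i = j
  · simp [hij]
  · have h2 : {X : Fin N → Torus d | i ≠ j → ε < torusDist (X i) (X j)}
        = {X : Fin N → Torus d | ε < torusDist (X i) (X j)} := by
      ext X; simp [hij]
    rw [h2]
    exact isOpen_lt continuous_const (continuous_torusDist₂ (continuous_apply i) (continuous_apply j))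

/-- Partition-function coefficients as `ℝ≥0∞`. -/
def ZM (d : ℕ) (ε : ℝ) (N : ℕ) : ℝ≥0∞ := volume (exclSet d ε N)

lemma ZM_le_one (d : ℕ) (ε : ℝ) (N : ℕ) : ZM d ε N ≤ 1 :=
  (measure_mono (Set.subset_univ _)).trans_eq measure_univ

lemma ZM_ne_top (d : ℕ) (ε : ℝ) (N : ℕ) : ZM d ε N ≠ ⊤ :=
  ((ZM_le_one d ε N).trans_lt ENNReal.one_lt_top).ne

/-- Real-valued partition coefficients. -/
def Zr (d : ℕ) (ε : ℝ) (N : ℕ) : ℝ := (ZM d ε N).toReal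

lemma Zr_nonneg (d : ℕ) (ε : ℝ) (N : ℕ) : 0 ≤ Zr d ε N := ENNReal.toReal_nonneg

lemma Zr_le_one (d : ℕ) (ε : ℝ) (N : ℕ) : Zr d ε N ≤ 1 := by
  simpa [Zr] using ENNReal.toReal_mono (by simp) (ZM_le_one d ε N)

lemma Zr_zero (d : ℕ) (ε : ℝ) : Zr d ε 0 = 1 := by
  have h : exclSet d ε 0 = Set.univ := by
    ext X; simp only [exclSet, Set.mem_setOf_eq, Set.mem_univ, iff_true]
    exact fun i => i.elim0
  simp [Zr, ZM, h]

lemma Zr_one (d : ℕ) (ε : ℝ) : Zr d ε 1 = 1 := by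
  have h : exclSet d ε 1 = Set.univ := by
    ext X; simp only [exclSet, Set.mem_setOf_eq, Set.mem_univ, iff_true]
    exact fun i j hij => absurd (Subsingleton.elim i j) hij
  simp [Zr, ZM, h]

lemma integral_exclInd (d : ℕ) (ε : ℝ) (N : ℕ) :
    ∫ X : Fin N → Torus d, exclInd ε X = Zr d ε N := by
  have h : (fun X : Fin N → Torus d => exclInd ε X)
      = (exclSet d ε N).indicator (1 : (Fin N → Torus d) → ℝ) := by
    ext X
    simp only [exclInd]
    by_cases hX : ∀ i j : Fin N, i ≠ j → ε < torusDist (X i) (X j)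
    · rw [if_pos hX, Set.indicator_of_mem (show X ∈ exclSet d ε N from hX), Pi.one_apply]
    · rw [if_neg hX, Set.indicator_of_notMem (show X ∉ exclSet d ε N from hX)]
  rw [h, integral_indicator_one (isOpen_exclSet d ε N).measurableSet]
  rfl

lemma comp_succAbove_mem {d : ℕ} {ε : ℝ} {N : ℕ} (k : Fin (N+1)) {X : Fin (N+1) → Torus d}
    (hX : X ∈ exclSet d ε (N+1)) : (fun j => X (k.succAbove j)) ∈ exclSet d ε N :=
  fun i j hij => hX _ _ (fun h => hij (Fin.succAbove_right_injective h))

lemma e_apply {d N : ℕ} (k : Fin (N+1)) (X : Fin (N+1) → Torus d) :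
    MeasurableEquiv.piFinSuccAbove (fun _ : Fin (N+1) => Torus d) k X
      = (X k, fun j => X (k.succAbove j)) := rfl

lemma ZM_succ_le (d : ℕ) (ε : ℝ) (N : ℕ) : ZM d ε (N+1) ≤ ZM d ε N := by
  set e := MeasurableEquiv.piFinSuccAbove (fun _ : Fin (N+1) => Torus d) 0 with he
  have hmp := volume_preserving_piFinSuccAbove (fun _ : Fin (N+1) => Torus d) 0
  have hsub : exclSet d ε (N+1) ⊆ e ⁻¹' (Set.univ ×ˢ exclSet d ε N) := by
    intro X hX
    refine Set.mem_preimage.2 ?_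
    rw [he, e_apply]
    exact ⟨Set.mem_univ _, comp_succAbove_mem 0 hX⟩
  calc ZM d ε (N+1) ≤ volume (e ⁻¹' (Set.univ ×ˢ exclSet d ε N)) := measure_mono hsub
    _ = volume (Set.univ ×ˢ exclSet d ε N) :=
        hmp.measure_preimage
          (MeasurableSet.univ.prod (isOpen_exclSet d ε N).measurableSet).nullMeasurableSet
    _ = volume (Set.univ : Set (Torus d)) * ZM d ε N := by
        rw [Measure.volume_eq_prod, Measure.prod_prod]; rfl
    _ = ZM d ε N := by simp

lemma ZM_antitone (d : ℕ) (ε : ℝ) : Antitone fun N => ZM d ε N :=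
  antitone_nat_of_succ_le fun N => ZM_succ_le d ε N

lemma ball_vol {d : ℕ} {ε : ℝ} (hε : 0 < ε) (y : Torus d) :
    volume {x : Torus d | torusDist y x ≤ ε} ≤ ENNReal.ofReal ((2*ε)^d) := by
  have hsub : {x : Torus d | torusDist y x ≤ ε}
      ⊆ Set.univ.pi fun k => Metric.closedBall (y k) ε := by
    intro x hx
    refine Set.mem_univ_pi.2 fun k => ?_
    rw [Metric.mem_closedBall, dist_comm]
    exact (dist_le_torusDist y x k).trans hx
  refine (measure_mono hsub).trans ?_
  rw [volume_pi_pi]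
  have hcb : ∀ k : Fin d, volume (Metric.closedBall (y k) ε) ≤ ENNReal.ofReal (2*ε) := by
    intro k
    rw [AddCircle.volume_closedBall]
    exact ENNReal.ofReal_le_ofReal inf_le_right
  calc (∏ k : Fin d, volume (Metric.closedBall (y k) ε))
      ≤ ∏ _k : Fin d, ENNReal.ofReal (2*ε) := Finset.prod_le_prod' fun k _ => hcb k
    _ = ENNReal.ofReal (2*ε) ^ d := by simp
    _ = ENNReal.ofReal ((2*ε)^d) := by
        rw [ENNReal.ofReal_pow (by positivity)]

lemma cyl_bound (d : ℕ) {ε : ℝ} (hε : 0 < ε) (M : ℕ) (k : Fin (M+1)) (y : Torus d) :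
    volume {X : Fin (M+1) → Torus d | X ∈ exclSet d ε (M+1) ∧ torusDist y (X k) ≤ ε}
      ≤ ENNReal.ofReal ((2*ε)^d) * ZM d ε M := by
  set e := MeasurableEquiv.piFinSuccAbove (fun _ : Fin (M+1) => Torus d) k with he
  have hmp := volume_preserving_piFinSuccAbove (fun _ : Fin (M+1) => Torus d) k
  set B : Set (Torus d) := {x | torusDist y x ≤ ε} with hB
  have hBmeas : MeasurableSet B := by
    have : IsClosed B :=
      isClosed_le (continuous_torusDist₂ continuous_const continuous_id) continuous_const
    exact this.measurableSet
  have hsub : {X : Fin (M+1) → Torus d | X ∈ exclSet d ε (M+1) ∧ torusDist y (X k) ≤ ε}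
      ⊆ e ⁻¹' (B ×ˢ exclSet d ε M) := by
    intro X hX
    refine Set.mem_preimage.2 ?_
    rw [he, e_apply]
    exact ⟨hX.2, comp_succAbove_mem k hX.1⟩
  calc volume {X : Fin (M+1) → Torus d | X ∈ exclSet d ε (M+1) ∧ torusDist y (X k) ≤ ε}
      ≤ volume (e ⁻¹' (B ×ˢ exclSet d ε M)) := measure_mono hsub
    _ = volume (B ×ˢ exclSet d ε M) :=
        hmp.measure_preimage
          (hBmeas.prod (isOpen_exclSet d ε M).measurableSet).nullMeasurableSet
    _ = volume B * ZM d ε M := by rw [Measure.volume_eq_prod, Measure.prod_prod]; rfl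
    _ ≤ ENNReal.ofReal ((2*ε)^d) * ZM d ε M := mul_le_mul_left (ball_vol hε y) _

lemma ZM_lower (d : ℕ) {ε : ℝ} (hε : 0 < ε) (M : ℕ) :
    ZM d ε (M+1) ≤ ZM d ε (M+2) + (M+1) * ENNReal.ofReal ((2*ε)^d) * ZM d ε M := by
  set C : ℝ≥0∞ := (M+1) * ENNReal.ofReal ((2*ε)^d) * ZM d ε M with hC
  set T : Set (Torus d × (Fin (M+1) → Torus d)) :=
    {p | p.2 ∈ exclSet d ε (M+1) ∧ ∀ j, ε < torusDist p.1 (p.2 j)} with hTdef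
  have hTopen : IsOpen T := by
    have h1 : IsOpen {p : Torus d × (Fin (M+1) → Torus d) | p.2 ∈ exclSet d ε (M+1)} :=
      (isOpen_exclSet d ε (M+1)).preimage continuous_snd
    have h2 : ∀ j : Fin (M+1),
        IsOpen {p : Torus d × (Fin (M+1) → Torus d) | ε < torusDist p.1 (p.2 j)} :=
      fun j => isOpen_lt continuous_const
        (continuous_torusDist₂ continuous_fst ((continuous_apply j).comp continuous_snd))
    have hT2 : T = {p : Torus d × (Fin (M+1) → Torus d) | p.2 ∈ exclSet d ε (M+1)}
        ∩ ⋂ j, {p : Torus d × (Fin (M+1) → Torus d) | ε < torusDist p.1 (p.2 j)} := by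
      ext p; simp [hTdef, Set.mem_iInter]
    rw [hT2]
    exact h1.inter (isOpen_iInter_of_finite h2)
  have hT : MeasurableSet T := hTopen.measurableSet
  set e := MeasurableEquiv.piFinSuccAbove (fun _ : Fin (M+2) => Torus d) 0 with he
  have hmp := volume_preserving_piFinSuccAbove (fun _ : Fin (M+2) => Torus d) 0
  have hpre : exclSet d ε (M+2) = e ⁻¹' T := by
    ext X
    rw [Set.mem_preimage, he, e_apply]
    constructor
    · intro hX
      refine ⟨comp_succAbove_mem 0 hX, fun j => ?_⟩
      exact hX 0 ((0 : Fin (M+2)).succAbove j) (fun h => (Fin.succAbove_ne 0 j) h.symm)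
    · rintro ⟨h1, h2⟩ i j hij
      rcases Fin.eq_zero_or_eq_succ i with hi | ⟨i', rfl⟩
      · subst hi
        rcases Fin.eq_zero_or_eq_succ j with hj | ⟨j', rfl⟩
        · exact absurd hj.symm hij
        · simpa [Fin.succAbove_zero] using h2 j'
      · rcases Fin.eq_zero_or_eq_succ j with hj | ⟨j', rfl⟩
        · subst hj
          rw [torusDist_comm]
          simpa [Fin.succAbove_zero] using h2 i'
        · have hne : i' ≠ j' := fun h => hij (by rw [h])
          simpa [Fin.succAbove_zero] using h1 i' j' hne
  have h1 : ZM d ε (M+2) = ∫⁻ y : Torus d, volume (Prod.mk y ⁻¹' T) := by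
    rw [ZM, hpre, hmp.measure_preimage hT.nullMeasurableSet, Measure.volume_eq_prod,
      Measure.prod_apply hT]
  have hslice : ∀ y : Torus d, ZM d ε (M+1) ≤ volume (Prod.mk y ⁻¹' T) + C := by
    intro y
    have hcover : exclSet d ε (M+1) ⊆ (Prod.mk y ⁻¹' T)
        ∪ ⋃ j : Fin (M+1),
            {X : Fin (M+1) → Torus d | X ∈ exclSet d ε (M+1) ∧ torusDist y (X j) ≤ ε} := by
      intro X hX
      by_cases h : ∀ j, ε < torusDist y (X j)
      · exact Or.inl ⟨hX, h⟩
      · push_neg at h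
        obtain ⟨j, hj⟩ := h
        exact Or.inr (Set.mem_iUnion.2 ⟨j, hX, hj⟩)
    calc ZM d ε (M+1)
        ≤ volume ((Prod.mk y ⁻¹' T)
            ∪ ⋃ j : Fin (M+1),
              {X : Fin (M+1) → Torus d | X ∈ exclSet d ε (M+1) ∧ torusDist y (X j) ≤ ε}) :=
          measure_mono hcover
      _ ≤ volume (Prod.mk y ⁻¹' T)
            + volume (⋃ j : Fin (M+1),
              {X : Fin (M+1) → Torus d | X ∈ exclSet d ε (M+1) ∧ torusDist y (X j) ≤ ε}) :=
          measure_union_le _ _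
      _ ≤ volume (Prod.mk y ⁻¹' T)
            + ∑ j : Fin (M+1), volume
              {X : Fin (M+1) → Torus d | X ∈ exclSet d ε (M+1) ∧ torusDist y (X j) ≤ ε} :=
          add_le_add_right (measure_iUnion_fintype_le _ _) _
      _ ≤ volume (Prod.mk y ⁻¹' T)
            + ∑ _j : Fin (M+1), ENNReal.ofReal ((2*ε)^d) * ZM d ε M :=
          add_le_add_right (Finset.sum_le_sum fun j _ => cyl_bound d hε M j y) _
      _ = volume (Prod.mk y ⁻¹' T) + C := by
          rw [hC, Finset.sum_const, Finset.card_univ, Fintype.card_fin, nsmul_eq_mul, mul_assoc]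
          norm_cast
  calc ZM d ε (M+1) = ∫⁻ _y : Torus d, ZM d ε (M+1) := by
        rw [lintegral_const, measure_univ, mul_one]
    _ ≤ ∫⁻ y : Torus d, (volume (Prod.mk y ⁻¹' T) + C) := lintegral_mono hslice
    _ = (∫⁻ y : Torus d, volume (Prod.mk y ⁻¹' T)) + C := by
        rw [lintegral_add_right _ measurable_const, lintegral_const, measure_univ, mul_one]
    _ = ZM d ε (M+2) + C := by rw [h1]

lemma Zr_succ_le (d : ℕ) (ε : ℝ) (N : ℕ) : Zr d ε (N+1) ≤ Zr d ε N :=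
  ENNReal.toReal_mono (ZM_ne_top d ε N) (ZM_succ_le d ε N)

lemma Zr_lower (d : ℕ) {ε : ℝ} (hε : 0 < ε) (M : ℕ) :
    Zr d ε (M+1) ≤ Zr d ε (M+2) + ((M:ℝ)+1) * (2*ε)^d * Zr d ε M := by
  have h := ZM_lower d hε M
  have hfin : ZM d ε (M+2) + (M+1) * ENNReal.ofReal ((2*ε)^d) * ZM d ε M ≠ ⊤ := by
    refine ENNReal.add_ne_top.2 ⟨ZM_ne_top _ _ _, ?_⟩
    exact ENNReal.mul_ne_top
      (ENNReal.mul_ne_top (by simp) ENNReal.ofReal_ne_top) (ZM_ne_top _ _ _)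
  have h2 := ENNReal.toReal_mono hfin h
  have hmulfin : ((M:ℝ≥0∞)+1) * ENNReal.ofReal ((2*ε)^d) * ZM d ε M ≠ ⊤ :=
    ENNReal.mul_ne_top
      (ENNReal.mul_ne_top (by simp) ENNReal.ofReal_ne_top) (ZM_ne_top _ _ _)
  rw [ENNReal.toReal_add (ZM_ne_top _ _ _) hmulfin, ENNReal.toReal_mul, ENNReal.toReal_mul] at h2
  have hcast : (((M:ℕ)+1 : ℝ≥0∞)).toReal = (M:ℝ)+1 := by
    rw [ENNReal.toReal_add (by simp) (by simp)]
    simp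
  rw [hcast, ENNReal.toReal_ofReal (by positivity : (0:ℝ) ≤ (2*ε)^d)] at h2
  exact h2

end HS

section SumSide
open HS Filter

lemma muBG_pos {d : ℕ} (hd : 1 ≤ d) {ε : ℝ} (hε : 0 < ε) : 0 < muBG d ε := by
  unfold muBG; positivity

/-- The main quantitative bounds for fixed `ε`. -/
lemma ratio_bounds (d : ℕ) (hd : 2 ≤ d) {ε : ℝ} (hε : 0 < ε) :
    1 - 2^d * ε ≤ (muBG d ε)⁻¹ *
        ((partitionZ d ε)⁻¹ *
          ∑' N : ℕ, muBG d ε ^ N / (Nat.factorial N : ℝ) * (N : ℝ) *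
            ∫ X : Fin N → Torus d, exclInd ε X) ∧
      (muBG d ε)⁻¹ *
        ((partitionZ d ε)⁻¹ *
          ∑' N : ℕ, muBG d ε ^ N / (Nat.factorial N : ℝ) * (N : ℝ) *
            ∫ X : Fin N → Torus d, exclInd ε X) ≤ 1 := by
  have hμ : 0 < muBG d ε := muBG_pos (by omega) hε
  set μ := muBG d ε with hμdef
  set w : ℕ → ℝ := fun N => μ^N / (Nat.factorial N : ℝ) with hw
  have hw0 : ∀ N, 0 ≤ w N := fun N => by positivity
  have hw01 : w 0 = 1 := by show μ^0/(Nat.factorial 0 : ℝ) = 1; norm_num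
  have hsw : Summable w := Real.summable_pow_div_factorial μ
  have hshift : ∀ K : ℕ, w (K+1) * ((K:ℝ)+1) = μ * w K := by
    intro K
    rw [hw]
    simp only [pow_succ, Nat.factorial_succ]
    have h1 : ((K:ℝ)+1) ≠ 0 := by positivity
    have h2 : (Nat.factorial K : ℝ) ≠ 0 := Nat.cast_ne_zero.2 (Nat.factorial_ne_zero K)
    field_simp
    push_cast
    ring
  have hsum1 : Summable fun N => w N * Zr d ε N :=
    Summable.of_nonneg_of_le (fun N => mul_nonneg (hw0 N) (Zr_nonneg d ε N))
      (fun N => by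
        calc w N * Zr d ε N ≤ w N * 1 :=
              mul_le_mul_of_nonneg_left (Zr_le_one d ε N) (hw0 N)
          _ = w N := mul_one _) hsw
  have hsum2 : Summable fun N => w N * Zr d ε (N+1) :=
    Summable.of_nonneg_of_le (fun N => mul_nonneg (hw0 N) (Zr_nonneg d ε _))
      (fun N => by
        calc w N * Zr d ε (N+1) ≤ w N * 1 :=
              mul_le_mul_of_nonneg_left (Zr_le_one d ε _) (hw0 N)
          _ = w N := mul_one _) hsw
  set S : ℝ := ∑' N, w N * Zr d ε N with hS
  set S' : ℝ := ∑' N, w N * Zr d ε (N+1) with hS'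
  have hS_ge_1 : 1 ≤ S := by
    have h0 : w 0 * Zr d ε 0 = 1 := by rw [hw01, Zr_zero, mul_one]
    have := Summable.le_tsum hsum1 0 (fun j _ => mul_nonneg (hw0 j) (Zr_nonneg d ε j))
    rw [h0] at this; exact this
  have hS_pos : 0 < S := lt_of_lt_of_le one_pos hS_ge_1
  have hS'_le_S : S' ≤ S :=
    Summable.tsum_le_tsum
      (fun N => mul_le_mul_of_nonneg_left (Zr_succ_le d ε N) (hw0 N)) hsum2 hsum1
  -- the partition function is S
  have hpartZ : partitionZ d ε = S := by
    rw [partitionZ, hS]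
    exact tsum_congr fun N => by rw [integral_exclInd]
  -- the numerator sum is μ * S'
  have hnum : (∑' N : ℕ, muBG d ε ^ N / (Nat.factorial N : ℝ) * (N : ℝ) *
      ∫ X : Fin N → Torus d, exclInd ε X) = μ * S' := by
    have hrw : (fun N : ℕ => muBG d ε ^ N / (Nat.factorial N : ℝ) * (N : ℝ) *
        ∫ X : Fin N → Torus d, exclInd ε X) = fun N : ℕ => w N * (N:ℝ) * Zr d ε N := by
      funext N; rw [integral_exclInd]
    rw [hrw]
    have hfsucc : ∀ K : ℕ, w (K+1) * ((K+1 : ℕ):ℝ) * Zr d ε (K+1)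
        = μ * (w K * Zr d ε (K+1)) := by
      intro K
      push_cast
      rw [hshift K, mul_assoc]
    have hsumf : Summable fun N : ℕ => w N * (N:ℝ) * Zr d ε N := by
      refine (summable_nat_add_iff 1).1 ?_
      exact ((hsum2.mul_left μ).congr fun K => (hfsucc K).symm)
    rw [Summable.tsum_eq_zero_add hsumf]
    simp only [Nat.cast_zero, mul_zero, zero_mul, zero_add]
    rw [tsum_congr hfsucc, tsum_mul_left]
  -- lower bound on S'
  have hkey : ∀ K : ℕ, w (K+1) * Zr d ε (K+1)
      ≤ w (K+1) * Zr d ε (K+2) + (2*ε)^d * μ * (w K * Zr d ε K) := by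
    intro K
    have h := Zr_lower d hε K
    have h2 := mul_le_mul_of_nonneg_left h (hw0 (K+1))
    have h3 : w (K+1) * (((K:ℝ)+1) * (2*ε)^d * Zr d ε K)
        = (2*ε)^d * μ * (w K * Zr d ε K) := by
      rw [show w (K+1) * (((K:ℝ)+1) * (2*ε)^d * Zr d ε K)
          = (w (K+1) * ((K:ℝ)+1)) * ((2*ε)^d * Zr d ε K) by ring, hshift K]
      ring
    calc w (K+1) * Zr d ε (K+1)
        ≤ w (K+1) * (Zr d ε (K+2) + ((K:ℝ)+1) * (2*ε)^d * Zr d ε K) := h2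
      _ = w (K+1) * Zr d ε (K+2) + w (K+1) * (((K:ℝ)+1) * (2*ε)^d * Zr d ε K) := by ring
      _ = w (K+1) * Zr d ε (K+2) + (2*ε)^d * μ * (w K * Zr d ε K) := by rw [h3]
  have hsumA : Summable fun K : ℕ => w (K+1) * Zr d ε (K+1) := (summable_nat_add_iff 1).2 hsum1
  have hsumB : Summable fun K : ℕ => w (K+1) * Zr d ε (K+2) := (summable_nat_add_iff 1).2 hsum2
  have hsumC : Summable fun K : ℕ => (2*ε)^d * μ * (w K * Zr d ε K) := hsum1.mul_left _
  have hmain : S ≤ S' + (2*ε)^d * μ * S := by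
    have hSsplit : S = 1 + ∑' K, w (K+1) * Zr d ε (K+1) := by
      rw [hS, Summable.tsum_eq_zero_add hsum1, hw01, Zr_zero, mul_one]
    have hS'split : S' = 1 + ∑' K, w (K+1) * Zr d ε (K+2) := by
      rw [hS', Summable.tsum_eq_zero_add hsum2, hw01, Zr_one, mul_one]
    have h := Summable.tsum_le_tsum hkey hsumA (hsumB.add hsumC)
    rw [Summable.tsum_add hsumB hsumC, tsum_mul_left, ← hS] at h
    linarith [hSsplit, hS'split, h]
  have hpow : (2*ε)^d * μ = 2^d * ε := by
    rw [hμdef]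
    unfold muBG
    rw [mul_pow]
    have hd1 : ε ^ d = ε ^ (d-1) * ε := by
      rw [← pow_succ]
      congr 1
      omega
    rw [hd1]
    have : ε ^ (d-1) ≠ 0 := by positivity
    field_simp
  rw [hpow] at hmain
  -- put the expression in the form S'/S
  have hexpr : (muBG d ε)⁻¹ *
      ((partitionZ d ε)⁻¹ *
        ∑' N : ℕ, muBG d ε ^ N / (Nat.factorial N : ℝ) * (N : ℝ) *
          ∫ X : Fin N → Torus d, exclInd ε X) = S' / S := by
    rw [hpartZ, hnum]
    field_simp
    exact mul_div_cancel_left₀ S' hμ.ne'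
  rw [hexpr]
  constructor
  · rw [le_div_iff₀ hS_pos]
    nlinarith
  · rw [div_le_one hS_pos]
    exact hS'_le_S

end SumSide

end

/-- Low-density normalization of the mean particle number:
`μ_ε^{-1} 𝔼^eq_ε[𝒩] → 1` as `ε → 0⁺`. -/
theorem mean_particle_number_normalization (d : ℕ) (hd : 2 ≤ d) :
    Filter.Tendsto
      (fun ε : ℝ => (muBG d ε)⁻¹ *
        ((partitionZ d ε)⁻¹ *
          ∑' N : ℕ, muBG d ε ^ N / (Nat.factorial N : ℝ) * (N : ℝ) *
            ∫ X : Fin N → Torus d, exclInd ε X))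
      (nhdsWithin 0 (Set.Ioi 0)) (nhds 1) := by
  have hlow : Filter.Tendsto (fun ε : ℝ => 1 - 2^d * ε) (nhdsWithin 0 (Set.Ioi 0)) (nhds 1) := by
    have hc : Filter.Tendsto (fun ε : ℝ => 1 - 2^d * ε) (nhds 0) (nhds (1 - 2^d * 0)) :=
      (continuous_const.sub (continuous_const.mul continuous_id)).tendsto 0
    simpa using hc.mono_left nhdsWithin_le_nhds
  refine tendsto_of_tendsto_of_tendsto_of_le_of_le' hlow tendsto_const_nhds ?_ ?_
  · filter_upwards [self_mem_nhdsWithin] with ε hε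
    exact (ratio_bounds d hd (Set.mem_Ioi.mp hε)).1
  · filter_upwards [self_mem_nhdsWithin] with ε hε
    exact (ratio_bounds d hd (Set.mem_Ioi.mp hε)).2
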